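/- Let d ∈ ℕ, 1 ≤ r < 2, ρ ≥ 0, N > 0, and t ≥ t₀ ≥ 0. Let Z₂ = Z₂(t,t₀,N) := {ξ ∈ ℝ^d : (1+t₀)|ξ| ≤ N ≤ (1+t)|ξ|}, and set α := 1/2 + ρ − d(2−r)/(2r). Then the L^{2r/(2−r)}(Z₂) norm of the function ξ ↦ |ξ|^{−1/2−ρ} satisfies: ‖|ξ|^{−1/2−ρ}‖_{L^{2r/(2−r)}(Z₂)} ≤ C (1+t₀)^α if α < 0; ≤ C {log(1+t)}^{1/2} if α = 0 and r = 1; ≤ C (1+t)^α if α > 0; where C depends only on d, r, ρ, and N (not on t or t₀ beyond the indicated dependence). -/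

import Mathlib

open MeasureTheory Real Filter Topology
open scoped ENNReal FourierTransform Classical

noncomputable section

/-- `d`-dimensional Euclidean space. -/
abbrev Ed (d : ℕ) : Type := EuclideanSpace ℝ (Fin d)

variable {d : ℕ}

/-- First time derivative `∂ₜ v`. -/
def dt1 (v : ℝ → Ed d → ℝ) (t : ℝ) (x : Ed d) : ℝ := deriv (fun s => v s x) t

/-- Second time derivative `∂ₜ² v`. -/
def dt2 (v : ℝ → Ed d → ℝ) (t : ℝ) (x : Ed d) : ℝ := deriv (deriv (fun s => v s x)) t

/-- Spatial Laplacian, as the sum of the second derivatives in the coordinate directions. -/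
def lapl (f : Ed d → ℝ) (x : Ed d) : ℝ :=
  ∑ i : Fin d, iteratedFDeriv ℝ 2 f x ![EuclideanSpace.single i 1, EuclideanSpace.single i 1]

/-- `L²` norm. -/
def L2N (f : Ed d → ℝ) : ℝ≥0∞ := eLpNorm f 2 volume

/-- `L^r` norm. -/
def LrN (r : ℝ) (f : Ed d → ℝ) : ℝ≥0∞ := eLpNorm f (ENNReal.ofReal r) volume

/-- Homogeneous `Ḣ¹` seminorm `‖∇f‖_{L²}`. -/
def H1dotN (f : Ed d → ℝ) : ℝ≥0∞ := eLpNorm (fun x => ‖fderiv ℝ f x‖) 2 volume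

/-- The real part of `ν`, where `ν = (1/2)√(1-4μ)` if `μ ≤ 1/4` and `ν = (i/2)√(4μ-1)` else. -/
def reNu (μ : ℝ) : ℝ := if μ ≤ 1/4 then Real.sqrt (1 - 4*μ) / 2 else 0

/-- `α(r,μ) = 1/2 + Re ν - d(2-r)/(2r)`. -/
def alphaExp (d : ℕ) (r μ : ℝ) : ℝ := 1/2 + reNu μ - d*(2-r)/(2*r)

/-- `δ = 1` if `μ = 1/4`, `δ = 0` otherwise. -/
def deltaExp (μ : ℝ) : ℝ := if μ = 1/4 then 1 else 0

/-- `v` is a solution of `∂ₜ²v - Δv + μ(1+t)⁻² v = 0` on `(t₀,∞) × ℝ^d` with data `(v₀, v₁)`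
at time `t₀`. -/
def IsSolKG (d : ℕ) (μ t₀ : ℝ) (v : ℝ → Ed d → ℝ) (v₀ v₁ : Ed d → ℝ) : Prop :=
  (∀ x, v t₀ x = v₀ x) ∧ (∀ x, dt1 v t₀ x = v₁ x) ∧
    ∀ t, t₀ < t → ∀ x, dt2 v t x - lapl (v t) x + μ / (1+t)^2 * v t x = 0

/-- `w` solves the free wave equation `∂ₜ²w - Δw = 0`; then `W(t)(w(0),∂ₜw(0)) = (w(t),∂ₜw(t))`. -/
def IsFreeWave (d : ℕ) (w : ℝ → Ed d → ℝ) : Prop :=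
  ∀ t x, dt2 w t x - lapl (w t) x = 0

/-- `u` solves (DW): `∂ₜ²u - Δu + μ₁(1+t)⁻¹∂ₜu + μ₂(1+t)⁻²u = 0` with data `(u₀,u₁)` at `t=0`. -/
def IsSolDW (d : ℕ) (μ₁ μ₂ : ℝ) (u : ℝ → Ed d → ℝ) (u₀ u₁ : Ed d → ℝ) : Prop :=
  (∀ x, u 0 x = u₀ x) ∧ (∀ x, dt1 u 0 x = u₁ x) ∧
    ∀ t, 0 < t → ∀ x,
      dt2 u t x - lapl (u t) x + μ₁/(1+t) * dt1 u t x + μ₂/(1+t)^2 * u t x = 0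

/-- `(f,g) ∈ Ḣ¹ × L²`. -/
def MemH1dotL2 (f g : Ed d → ℝ) : Prop :=
  MemLp (fun x => ‖fderiv ℝ f x‖) 2 (volume : Measure (Ed d)) ∧
    MemLp g 2 (volume : Measure (Ed d))

/-- The `Ḣ¹ × L²` distance between `v⃗(t) = (v(t),∂ₜv(t))` and `w⃗(t) = (w(t),∂ₜw(t))`. -/
def waveDist (v w : ℝ → Ed d → ℝ) (t : ℝ) : ℝ≥0∞ :=
  H1dotN (fun x => v t x - w t x) + L2N (fun x => dt1 v t x - dt1 w t x)

/-- `(v₀,v₁) ∈ Σ^r = (H¹ ∩ L^r) × (L² ∩ L^r)`. -/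
def MemSigma (r : ℝ) (v₀ v₁ : Ed d → ℝ) : Prop :=
  MemLp v₀ 2 (volume : Measure (Ed d)) ∧
  MemLp (fun x => ‖fderiv ℝ v₀ x‖) 2 (volume : Measure (Ed d)) ∧
  MemLp v₀ (ENNReal.ofReal r) (volume : Measure (Ed d)) ∧
  MemLp v₁ 2 (volume : Measure (Ed d)) ∧
  MemLp v₁ (ENNReal.ofReal r) (volume : Measure (Ed d))

/-- The `Σ^r` norm of `(v₀,v₁)`. -/
def sigmaNorm (r : ℝ) (v₀ v₁ : Ed d → ℝ) : ℝ≥0∞ :=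
  L2N v₀ + H1dotN v₀ + LrN r v₀ + L2N v₁ + LrN r v₁

/-- The homogeneous Sobolev `Ḣ^{-s}` norm, via the Fourier transform. -/
def HnegN (s : ℝ) (f : Ed d → ℝ) : ℝ≥0∞ :=
  eLpNorm (fun ξ : Ed d => ‖ξ‖ ^ (-s) * ‖𝓕 (fun x : Ed d => (f x : ℂ)) ξ‖) 2 volume

/-- `(v₀,v₁) ∈ E^{(s)} = (H¹ ∩ Ḣ^{-s}) × (L² ∩ Ḣ^{-s})`. -/
def MemEs (s : ℝ) (v₀ v₁ : Ed d → ℝ) : Prop :=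
  MemLp v₀ 2 (volume : Measure (Ed d)) ∧
  MemLp (fun x => ‖fderiv ℝ v₀ x‖) 2 (volume : Measure (Ed d)) ∧
  HnegN s v₀ < ⊤ ∧
  MemLp v₁ 2 (volume : Measure (Ed d)) ∧
  HnegN s v₁ < ⊤

/-- The `E^{(s)}` norm of `(v₀,v₁)`. -/
def esNorm (s : ℝ) (v₀ v₁ : Ed d → ℝ) : ℝ≥0∞ :=
  L2N v₀ + H1dotN v₀ + HnegN s v₀ + L2N v₁ + HnegN s v₁

/-- The energy of (KG). -/
def energyKG (d : ℕ) (μ : ℝ) (v : ℝ → Ed d → ℝ) (t : ℝ) : ℝ :=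
  (1/2) * (∫ x, (dt1 v t x)^2) + (1/2) * (∫ x, ‖fderiv ℝ (v t) x‖^2) +
    μ/(2*(1+t)^2) * (∫ x, (v t x)^2)

/-- The frequency region `Z₂(t,t₀,N) = {ξ : (1+t₀)|ξ| ≤ N ≤ (1+t)|ξ|}`. -/
def Z2 (d : ℕ) (t₀ t N : ℝ) : Set (Ed d) :=
  {ξ : Ed d | (1+t₀) * ‖ξ‖ ≤ N ∧ N ≤ (1+t) * ‖ξ‖}


section AuxZ2

open Set in
private lemma Z2aux_rpow_helper {X K s β pp : ℝ} (hX : 0 ≤ X) (hK : 0 ≤ K) (hpp : 0 < pp)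
    (hs : 0 < s) (h : X ≤ K * s ^ (pp*β)) : X ^ (1/pp) ≤ K ^ (1/pp) * s ^ β := by
  calc X ^ (1/pp) ≤ (K * s ^ (pp*β)) ^ (1/pp) :=
        Real.rpow_le_rpow hX h (by positivity)
    _ = K ^ (1/pp) * s ^ β := by
        rw [Real.mul_rpow hK (Real.rpow_nonneg hs.le _), ← Real.rpow_mul hs.le]
        congr 1
        field_simp

open Set in
private lemma Z2aux_annulus_integral_eq (d : ℕ) (hd : 0 < d) (q a b : ℝ) (ha : 0 < a)
    (hab : a ≤ b) :
    ∫ ξ in {ξ : Ed d | a ≤ ‖ξ‖ ∧ ‖ξ‖ ≤ b}, ‖ξ‖ ^ q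
      = ((d : ℝ) * (volume (Metric.ball (0:Ed d) 1)).toReal) * ∫ y in a..b, y ^ ((d:ℝ)-1+q) := by
  haveI : Nontrivial (Ed d) :=
    Module.nontrivial_of_finrank_pos (R := ℝ) (by simpa [finrank_euclideanSpace] using hd)
  have hSc : IsClosed {ξ : Ed d | a ≤ ‖ξ‖ ∧ ‖ξ‖ ≤ b} := by
    rw [setOf_and]
    exact (isClosed_le continuous_const continuous_norm).inter
      (isClosed_le continuous_norm continuous_const)
  have hS := hSc.measurableSet
  have h1 : ∫ ξ in {ξ : Ed d | a ≤ ‖ξ‖ ∧ ‖ξ‖ ≤ b}, ‖ξ‖ ^ q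
      = ∫ ξ : Ed d, (Icc a b).indicator (fun s => s ^ q) ‖ξ‖ := by
    rw [← integral_indicator hS]
    apply integral_congr_ae; filter_upwards with ξ
    by_cases h : a ≤ ‖ξ‖ ∧ ‖ξ‖ ≤ b <;>
      simp [Set.indicator, h, Set.mem_Icc, Set.mem_setOf_eq]
  rw [h1, integral_fun_norm_addHaar volume (fun s => (Icc a b).indicator (fun s => s ^ q) s)]
  rw [finrank_euclideanSpace, Fintype.card_fin]
  rw [nsmul_eq_mul, smul_eq_mul, mul_assoc]
  congr 1
  congr 1
  have h2 : ∫ y in Ioi (0:ℝ), y ^ (d-1) • (Icc a b).indicator (fun s => s ^ q) y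
      = ∫ y in Ioi (0:ℝ), (Icc a b).indicator (fun s => s ^ (d-1) * s ^ q) y := by
    apply integral_congr_ae; filter_upwards with y
    by_cases h : y ∈ Icc a b <;> simp [Set.indicator, h]
  rw [h2, setIntegral_indicator measurableSet_Icc]
  have h3 : Ioi (0:ℝ) ∩ Icc a b = Icc a b := by
    apply inter_eq_right.mpr
    intro y hy; exact lt_of_lt_of_le ha hy.1
  rw [h3, intervalIntegral.integral_of_le hab, ← integral_Icc_eq_integral_Ioc]
  apply setIntegral_congr_fun measurableSet_Icc
  intro x hx
  have hx0 : 0 < x := lt_of_lt_of_le ha hx.1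
  simp only []
  rw [← Real.rpow_natCast x (d-1), ← Real.rpow_add hx0]
  congr 1
  have : ((d - 1 : ℕ) : ℝ) = (d:ℝ) - 1 := by
    have : 1 ≤ d := hd
    push_cast [Nat.cast_sub this]
    ring
  rw [this]

open Set in
private lemma Z2aux_annulus_eLpNorm_eq (d : ℕ) (hd : 0 < d) (p e a b : ℝ) (hp : 0 < p)
    (ha : 0 < a) (hab : a ≤ b) :
    eLpNorm (fun ξ : Ed d => ‖ξ‖ ^ e) (ENNReal.ofReal p)
        (volume.restrict {ξ : Ed d | a ≤ ‖ξ‖ ∧ ‖ξ‖ ≤ b})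
      = ENNReal.ofReal ((((d : ℝ) * (volume (Metric.ball (0:Ed d) 1)).toReal) *
          ∫ y in a..b, y ^ ((d:ℝ)-1+e*p)) ^ (1/p)) := by
  have hSc : IsClosed {ξ : Ed d | a ≤ ‖ξ‖ ∧ ‖ξ‖ ≤ b} := by
    rw [setOf_and]
    exact (isClosed_le continuous_const continuous_norm).inter
      (isClosed_le continuous_norm continuous_const)
  have hS := hSc.measurableSet
  have hPne : (ENNReal.ofReal p) ≠ 0 := by
    simp [ENNReal.ofReal_eq_zero, not_le, hp]
  rw [eLpNorm_eq_lintegral_rpow_enorm_toReal hPne ENNReal.ofReal_ne_top,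
    ENNReal.toReal_ofReal hp.le]
  have h1 : ∫⁻ ξ in {ξ : Ed d | a ≤ ‖ξ‖ ∧ ‖ξ‖ ≤ b}, ‖‖ξ‖ ^ e‖ₑ ^ p
      = ∫⁻ ξ in {ξ : Ed d | a ≤ ‖ξ‖ ∧ ‖ξ‖ ≤ b}, ENNReal.ofReal (‖ξ‖ ^ (e*p)) := by
    apply lintegral_congr_ae; filter_upwards with ξ
    rw [Real.enorm_eq_ofReal (Real.rpow_nonneg (norm_nonneg _) _),
      Real.rpow_mul (norm_nonneg _),
      ENNReal.ofReal_rpow_of_nonneg (Real.rpow_nonneg (norm_nonneg _) _) hp.le]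
  have hcomp : IsCompact {ξ : Ed d | a ≤ ‖ξ‖ ∧ ‖ξ‖ ≤ b} := by
    apply Metric.isCompact_of_isClosed_isBounded hSc
    apply Metric.isBounded_closedBall (x := (0:Ed d)) (r := b) |>.subset
    intro ξ hξ
    simpa [Metric.mem_closedBall] using hξ.2
  have hcont : ContinuousOn (fun ξ : Ed d => ‖ξ‖ ^ (e*p)) {ξ : Ed d | a ≤ ‖ξ‖ ∧ ‖ξ‖ ≤ b} := by
    apply ContinuousOn.rpow_const continuous_norm.continuousOn
    intro ξ hξ
    exact Or.inl (ne_of_gt (lt_of_lt_of_le ha hξ.1))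
  have hInt : IntegrableOn (fun ξ : Ed d => ‖ξ‖ ^ (e*p)) {ξ : Ed d | a ≤ ‖ξ‖ ∧ ‖ξ‖ ≤ b} :=
    hcont.integrableOn_compact hcomp
  have h2 : ∫⁻ ξ in {ξ : Ed d | a ≤ ‖ξ‖ ∧ ‖ξ‖ ≤ b}, ENNReal.ofReal (‖ξ‖ ^ (e*p))
      = ENNReal.ofReal (∫ ξ in {ξ : Ed d | a ≤ ‖ξ‖ ∧ ‖ξ‖ ≤ b}, ‖ξ‖ ^ (e*p)) := by
    rw [← ofReal_integral_eq_lintegral_ofReal hInt]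
    filter_upwards with ξ using Real.rpow_nonneg (norm_nonneg _) _
  have hintnn : 0 ≤ ((d : ℝ) * (volume (Metric.ball (0:Ed d) 1)).toReal) *
      ∫ y in a..b, y ^ ((d:ℝ)-1+e*p) := by
    apply mul_nonneg (by positivity)
    apply intervalIntegral.integral_nonneg hab
    intro u hu
    exact Real.rpow_nonneg (le_of_lt (lt_of_lt_of_le ha hu.1)) _
  rw [h1, h2, Z2aux_annulus_integral_eq d hd (e*p) a b ha hab,
    ENNReal.ofReal_rpow_of_nonneg hintnn (by positivity)]

end AuxZ2

/-- **Key multiplier estimate in `Z₂`.** Bounds for the `L^{2r/(2-r)}(Z₂)` norm of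
`|ξ|^{-1/2-ρ}`, with `α = 1/2 + ρ - d(2-r)/(2r)`, with a constant depending only on
`d, r, ρ, N`. -/
theorem Z2_multiplier_estimate (d : ℕ) (r ρ N : ℝ) (hr1 : 1 ≤ r) (hr2 : r < 2)
    (hρ : 0 ≤ ρ) (hN : 0 < N) :
    ∃ C : ℝ, 0 < C ∧ ∀ t₀ t : ℝ, 0 ≤ t₀ → t₀ ≤ t →
      ((1/2 + ρ - d*(2-r)/(2*r) < 0 →
        eLpNorm (fun ξ : Ed d => ‖ξ‖ ^ (-(1/2) - ρ)) (ENNReal.ofReal (2*r/(2-r)))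
            ((volume : Measure (Ed d)).restrict (Z2 d t₀ t N)) ≤
          ENNReal.ofReal (C * (1+t₀) ^ (1/2 + ρ - d*(2-r)/(2*r)))) ∧
       (1/2 + ρ - d*(2-r)/(2*r) = 0 ∧ r = 1 →
        eLpNorm (fun ξ : Ed d => ‖ξ‖ ^ (-(1/2) - ρ)) (ENNReal.ofReal (2*r/(2-r)))
            ((volume : Measure (Ed d)).restrict (Z2 d t₀ t N)) ≤
          ENNReal.ofReal (C * (Real.log (1+t)) ^ (1/2 : ℝ))) ∧
       (0 < 1/2 + ρ - d*(2-r)/(2*r) →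
        eLpNorm (fun ξ : Ed d => ‖ξ‖ ^ (-(1/2) - ρ)) (ENNReal.ofReal (2*r/(2-r)))
            ((volume : Measure (Ed d)).restrict (Z2 d t₀ t N)) ≤
          ENNReal.ofReal (C * (1+t) ^ (1/2 + ρ - d*(2-r)/(2*r))))) := by
  have hr0 : (0:ℝ) < r := by linarith
  have h2r : (0:ℝ) < 2 - r := by linarith
  set p : ℝ := 2*r/(2-r) with hpdef
  have hp : 0 < p := by positivity
  set α : ℝ := 1/2 + ρ - (d:ℝ)*(2-r)/(2*r) with hαdef
  set c : ℝ := (d : ℝ) * (volume (Metric.ball (0:Ed d) 1)).toReal with hcdef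
  have hc0 : 0 ≤ c := by positivity
  have hsum : ((d:ℝ) - 1 + (-(1/2) - ρ) * p) + 1 = -(p * α) := by
    rw [hpdef, hαdef]
    have h1 : r ≠ 0 := hr0.ne'
    have h2 : (2:ℝ) - r ≠ 0 := h2r.ne'
    field_simp
    ring
  clear_value p α c
  -- a general Z2 description
  have hZ : ∀ t₀ t : ℝ, 0 ≤ t₀ → t₀ ≤ t →
      Z2 d t₀ t N = {ξ : Ed d | N/(1+t) ≤ ‖ξ‖ ∧ ‖ξ‖ ≤ N/(1+t₀)} := by
    intro t₀ t h0 h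
    ext ξ
    simp only [Z2, Set.mem_setOf_eq, div_le_iff₀ (show (0:ℝ) < 1+t by linarith),
      le_div_iff₀ (show (0:ℝ) < 1+t₀ by linarith)]
    constructor
    · rintro ⟨h1, h2⟩
      exact ⟨by linarith [mul_comm (1+t) ‖ξ‖], by linarith [mul_comm (1+t₀) ‖ξ‖]⟩
    · rintro ⟨h1, h2⟩
      exact ⟨by linarith [mul_comm (1+t₀) ‖ξ‖], by linarith [mul_comm (1+t) ‖ξ‖]⟩
  rcases lt_trichotomy α 0 with hα | hα | hα
  · -- case α < 0
    have hd : 0 < d := by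
      rcases Nat.eq_zero_or_pos d with h | h
      · exfalso
        rw [hαdef, h] at hα
        norm_num at hα
        linarith
      · exact h
    have hγ : 0 < -(p*α) := by
      have h' := mul_pos hp (neg_pos.mpr hα)
      nlinarith [h']
    set K : ℝ := c * (N ^ (-(p*α)) / (-(p*α))) with hKdef
    have hK0 : 0 ≤ K :=
      mul_nonneg hc0 (div_nonneg (Real.rpow_nonneg hN.le _) hγ.le)
    refine ⟨max 1 (K ^ (1/p)), lt_of_lt_of_le one_pos (le_max_left _ _), ?_⟩
    intro t₀ t ht₀ htt
    refine ⟨fun _ => ?_, fun h => absurd h.1 hα.ne, fun h => absurd hα (asymm h)⟩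
    have hs : (0:ℝ) < 1 + t₀ := by linarith
    have hst : (0:ℝ) < 1 + t := by linarith
    have ha : 0 < N/(1+t) := by positivity
    have hab : N/(1+t) ≤ N/(1+t₀) := by
      apply div_le_div_of_nonneg_left hN.le hs
      linarith
    rw [hZ t₀ t ht₀ htt, Z2aux_annulus_eLpNorm_eq d hd p (-(1/2) - ρ) _ _ hp ha hab]
    apply ENNReal.ofReal_le_ofReal
    rw [← hcdef]
    set I : ℝ := ∫ y in (N/(1+t))..(N/(1+t₀)), y ^ ((d:ℝ)-1+(-(1/2)-ρ)*p) with hIdef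
    have hInn : 0 ≤ I :=
      intervalIntegral.integral_nonneg hab
        (fun u hu => Real.rpow_nonneg (le_trans ha.le hu.1) _)
    have hm1 : (-1:ℝ) < (d:ℝ)-1+(-(1/2)-ρ)*p := by linarith [hsum]
    have hIval : I = ((N/(1+t₀)) ^ (-(p*α)) - (N/(1+t)) ^ (-(p*α))) / (-(p*α)) := by
      rw [hIdef, integral_rpow (Or.inl hm1), hsum]
    have hb : (N/(1+t₀)) ^ (-(p*α)) = N ^ (-(p*α)) * (1+t₀) ^ (p*α) := by
      rw [Real.div_rpow hN.le hs.le, div_eq_mul_inv, ← Real.rpow_neg hs.le, neg_neg]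
    have hXle : c * I ≤ K * (1+t₀) ^ (p*α) := by
      have h1 : I ≤ (N ^ (-(p*α)) * (1+t₀) ^ (p*α)) / (-(p*α)) := by
        rw [hIval, hb]
        apply div_le_div_of_nonneg_right ?_ hγ.le
        have := Real.rpow_nonneg ha.le (-(p*α))
        linarith
      calc c * I ≤ c * ((N ^ (-(p*α)) * (1+t₀) ^ (p*α)) / (-(p*α))) :=
            mul_le_mul_of_nonneg_left h1 hc0
        _ = K * (1+t₀) ^ (p*α) := by rw [hKdef]; ring
    calc (c*I) ^ (1/p) ≤ K ^ (1/p) * (1+t₀) ^ α :=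
          Z2aux_rpow_helper (mul_nonneg hc0 hInn) hK0 hp hs hXle
      _ ≤ max 1 (K ^ (1/p)) * (1+t₀) ^ α :=
          mul_le_mul_of_nonneg_right (le_max_right _ _) (Real.rpow_nonneg hs.le _)
  · -- case α = 0
    have hd : 0 < d := by
      rcases Nat.eq_zero_or_pos d with h | h
      · exfalso
        rw [hαdef, h] at hα
        norm_num at hα
        linarith
      · exact h
    refine ⟨max 1 (c ^ (1/2:ℝ)), lt_of_lt_of_le one_pos (le_max_left _ _), ?_⟩
    intro t₀ t ht₀ htt
    refine ⟨fun h => absurd hα h.ne, fun hh => ?_, fun h => absurd hα h.ne'⟩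
    obtain ⟨-, hr1'⟩ := hh
    have hs : (0:ℝ) < 1 + t₀ := by linarith
    have hst : (0:ℝ) < 1 + t := by linarith
    have ha : 0 < N/(1+t) := by positivity
    have hab : N/(1+t) ≤ N/(1+t₀) := by
      apply div_le_div_of_nonneg_left hN.le hs
      linarith
    have hp2 : p = 2 := by rw [hpdef, hr1']; norm_num
    rw [hZ t₀ t ht₀ htt, Z2aux_annulus_eLpNorm_eq d hd p (-(1/2) - ρ) _ _ hp ha hab]
    apply ENNReal.ofReal_le_ofReal
    rw [← hcdef]
    have hm : (d:ℝ)-1+(-(1/2)-ρ)*p = -1 := by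
      have : -(p * α) = 0 := by rw [hα]; ring
      linarith [hsum]
    have hIval : (∫ y in (N/(1+t))..(N/(1+t₀)), y ^ ((d:ℝ)-1+(-(1/2)-ρ)*p))
        = Real.log ((1+t)/(1+t₀)) := by
      rw [show (∫ y in (N/(1+t))..(N/(1+t₀)), y ^ ((d:ℝ)-1+(-(1/2)-ρ)*p))
          = ∫ y in (N/(1+t))..(N/(1+t₀)), y⁻¹ from
        intervalIntegral.integral_congr fun y _ => by rw [hm, Real.rpow_neg_one]]
      rw [integral_inv (Set.notMem_uIcc_of_lt ha (lt_of_lt_of_le ha hab))]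
      congr 1
      field_simp
    rw [hIval]
    have hL0 : 0 ≤ Real.log ((1+t)/(1+t₀)) := by
      apply Real.log_nonneg
      rw [le_div_iff₀ hs]
      linarith
    have hlogt : Real.log ((1+t)/(1+t₀)) ≤ Real.log (1+t) := by
      apply Real.log_le_log (by positivity)
      apply div_le_self hst.le
      linarith
    have hlt0 : 0 ≤ Real.log (1+t) := Real.log_nonneg (by linarith)
    calc (c * Real.log ((1+t)/(1+t₀))) ^ (1/p)
        ≤ (c * Real.log (1+t)) ^ (1/p) := by
          apply Real.rpow_le_rpow (mul_nonneg hc0 hL0)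
            (mul_le_mul_of_nonneg_left hlogt hc0) (by positivity)
      _ = c ^ (1/2:ℝ) * (Real.log (1+t)) ^ (1/2:ℝ) := by
          rw [hp2, Real.mul_rpow hc0 hlt0]
      _ ≤ max 1 (c ^ (1/2:ℝ)) * (Real.log (1+t)) ^ (1/2:ℝ) :=
          mul_le_mul_of_nonneg_right (le_max_right _ _) (Real.rpow_nonneg hlt0 _)
  · -- case 0 < α
    rcases Nat.eq_zero_or_pos d with hd0 | hd
    · refine ⟨1, one_pos, ?_⟩
      intro t₀ t ht₀ htt
      have hst : (0:ℝ) < 1 + t := by linarith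
      subst hd0
      have hempty : Z2 0 t₀ t N = ∅ := by
        ext ξ
        have hξ : ξ = 0 := Subsingleton.elim ξ 0
        subst hξ
        simp only [Z2, norm_zero, mul_zero, Set.mem_setOf_eq, Set.mem_empty_iff_false,
          iff_false]
        rintro ⟨-, h⟩
        linarith
      rw [hempty, Measure.restrict_empty]
      refine ⟨fun h => absurd hα (asymm h), fun h => absurd h.1 hα.ne', fun _ => ?_⟩
      rw [eLpNorm_measure_zero]
      exact bot_le
    · have hγ : 0 < p*α := mul_pos hp hα
      set K : ℝ := c * (N ^ (-(p*α)) / (p*α)) with hKdef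
      have hK0 : 0 ≤ K :=
        mul_nonneg hc0 (div_nonneg (Real.rpow_nonneg hN.le _) hγ.le)
      refine ⟨max 1 (K ^ (1/p)), lt_of_lt_of_le one_pos (le_max_left _ _), ?_⟩
      intro t₀ t ht₀ htt
      refine ⟨fun h => absurd hα (asymm h), fun h => absurd h.1 hα.ne', fun _ => ?_⟩
      have hs : (0:ℝ) < 1 + t₀ := by linarith
      have hst : (0:ℝ) < 1 + t := by linarith
      have ha : 0 < N/(1+t) := by positivity
      have hab : N/(1+t) ≤ N/(1+t₀) := by
        apply div_le_div_of_nonneg_left hN.le hs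
        linarith
      rw [hZ t₀ t ht₀ htt, Z2aux_annulus_eLpNorm_eq d hd p (-(1/2) - ρ) _ _ hp ha hab]
      apply ENNReal.ofReal_le_ofReal
      rw [← hcdef]
      set I : ℝ := ∫ y in (N/(1+t))..(N/(1+t₀)), y ^ ((d:ℝ)-1+(-(1/2)-ρ)*p) with hIdef
      have hInn : 0 ≤ I :=
        intervalIntegral.integral_nonneg hab
          (fun u hu => Real.rpow_nonneg (le_trans ha.le hu.1) _)
      have hmne : (d:ℝ)-1+(-(1/2)-ρ)*p ≠ -1 := by
        intro h
        rw [h] at hsum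
        linarith
      have hIval : I = ((N/(1+t₀)) ^ (-(p*α)) - (N/(1+t)) ^ (-(p*α))) / (-(p*α)) := by
        rw [hIdef, integral_rpow (Or.inr ⟨hmne,
          Set.notMem_uIcc_of_lt ha (lt_of_lt_of_le ha hab)⟩), hsum]
      have hb : (N/(1+t)) ^ (-(p*α)) = N ^ (-(p*α)) * (1+t) ^ (p*α) := by
        rw [Real.div_rpow hN.le hst.le, div_eq_mul_inv, ← Real.rpow_neg hst.le, neg_neg]
      have hIval2 : I = ((N/(1+t)) ^ (-(p*α)) - (N/(1+t₀)) ^ (-(p*α))) / (p*α) := by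
        rw [hIval, div_neg, ← neg_div, neg_sub]
      have hXle : c * I ≤ K * (1+t) ^ (p*α) := by
        have h1 : I ≤ (N ^ (-(p*α)) * (1+t) ^ (p*α)) / (p*α) := by
          rw [hIval2, hb]
          apply div_le_div_of_nonneg_right ?_ hγ.le
          have := Real.rpow_nonneg (le_of_lt (lt_of_lt_of_le ha hab)) (-(p*α))
          linarith
        calc c * I ≤ c * ((N ^ (-(p*α)) * (1+t) ^ (p*α)) / (p*α)) :=
              mul_le_mul_of_nonneg_left h1 hc0
          _ = K * (1+t) ^ (p*α) := by rw [hKdef]; ring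
      calc (c*I) ^ (1/p) ≤ K ^ (1/p) * (1+t) ^ α :=
            Z2aux_rpow_helper (mul_nonneg hc0 hInn) hK0 hp hst hXle
        _ ≤ max 1 (K ^ (1/p)) * (1+t) ^ α :=
            mul_le_mul_of_nonneg_right (le_max_right _ _) (Real.rpow_nonneg hst.le _)
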